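/- arXiv:2409.14114 — 3 statements merged into one kernel-verified Lean document; each statement's English description precedes it below -/
import Mathlib

section
/- Uniform closeness of geodesic rays with the same endpoint excludes escape of small horospheres (key Gromov-hyperbolic computation): let X be a metric space, β, γ, σ : [0,∞) → X geodesic rays with γ(0) = β(0) = o and σ(0) = β(T) for some T ≥ 0, and suppose d(σ(t), β(t+T)) ≤ 2δ and d(γ(t+T), β(t+T)) ≤ 2δ for all t ≥ 0 (so d(σ(t), γ(t+T)) ≤ 4δ). Let (w_n) be a sequence in X and suppose for each n there are geodesic segments from o to w_n converging locally uniformly to γ, and from β(T) to w_n converging locally uniformly to σ. Then, writing z_T = β(T), for every t₀ ≥ 0: limsup_n (d(z_T, w_n) − d(o, w_n)) ≤ d(z_T, σ(t₀)) − d(o, σ(t₀)) + 2 d(σ(t₀), γ(t₀+T)) ≤ t₀ − (t₀ + T − 2δ) + 8δ = −T + 10δ. -/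
open Filter

/-- Key Gromov-hyperbolic computation: let `β, γ, σ : [0,∞) → X` be
geodesic rays with `γ(0) = β(0) = o` and `σ(0) = β(T)`, satisfying
`d(σ(t), β(t+T)) ≤ 2δ` and `d(γ(t), β(t)) ≤ 2δ` for all `t ≥ 0`. Suppose `(w_n)` is a
sequence with `d(o,w_n) → ∞` and `d(β(T),w_n) → ∞`, joined to `o` (resp. to `β(T)`) by
geodesic segments `γ_n` (resp. `σ_n`) which converge locally uniformly on `[0,∞)` to `γ`
(resp. `σ`). Then `limsup_n (d(β(T), w_n) - d(o, w_n)) ≤ -T + 10δ`. -/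
theorem stmt13 {X : Type*} [MetricSpace X] (δ T : ℝ) (hδ : 0 ≤ δ) (hT : 0 ≤ T)
    (β γ σ : ℝ → X) (o : X) (hβ0 : β 0 = o) (hγ0 : γ 0 = o) (hσ0 : σ 0 = β T)
    (hβray : ∀ s t : ℝ, 0 ≤ s → 0 ≤ t → dist (β s) (β t) = |s - t|)
    (hγray : ∀ s t : ℝ, 0 ≤ s → 0 ≤ t → dist (γ s) (γ t) = |s - t|)
    (hσray : ∀ s t : ℝ, 0 ≤ s → 0 ≤ t → dist (σ s) (σ t) = |s - t|)
    (hσβ : ∀ t : ℝ, 0 ≤ t → dist (σ t) (β (t + T)) ≤ 2 * δ)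
    (hγβ : ∀ t : ℝ, 0 ≤ t → dist (γ t) (β t) ≤ 2 * δ)
    (w : ℕ → X)
    (hwo : Tendsto (fun n => dist o (w n)) atTop atTop)
    (hwz : Tendsto (fun n => dist (β T) (w n)) atTop atTop)
    (γseg σseg : ℕ → ℝ → X)
    (hγseg : ∀ n, γseg n 0 = o ∧ γseg n (dist o (w n)) = w n ∧
      ∀ s t : ℝ, s ∈ Set.Icc 0 (dist o (w n)) → t ∈ Set.Icc 0 (dist o (w n)) →
        dist (γseg n s) (γseg n t) = |s - t|)
    (hσseg : ∀ n, σseg n 0 = β T ∧ σseg n (dist (β T) (w n)) = w n ∧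
      ∀ s t : ℝ, s ∈ Set.Icc 0 (dist (β T) (w n)) → t ∈ Set.Icc 0 (dist (β T) (w n)) →
        dist (σseg n s) (σseg n t) = |s - t|)
    (hγconv : TendstoLocallyUniformlyOn γseg γ atTop (Set.Ici 0))
    (hσconv : TendstoLocallyUniformlyOn σseg σ atTop (Set.Ici 0)) :
    Filter.limsup (fun n => dist (β T) (w n) - dist o (w n)) atTop ≤ -T + 10 * δ := by
  have hβT : dist (β T) (γ T) ≤ 2 * δ := by
    rw [dist_comm]; exact hγβ T hT
  have hγTconv : Tendsto (fun n => γseg n T) atTop (nhds (γ T)) :=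
    hγconv.tendsto_at (Set.mem_Ici.mpr hT)
  have hcb : IsCoboundedUnder (· ≤ ·) atTop
      (fun n => dist (β T) (w n) - dist o (w n)) := by
    refine isCoboundedUnder_le_of_le atTop (x := -T) (fun n => ?_)
    have h1 : dist o (β T) = T := by
      have := hβray 0 T le_rfl hT
      rw [hβ0] at this
      simpa [abs_of_nonpos (neg_nonpos.mpr hT)] using this
    have := abs_dist_sub_le (β T) o (w n)
    rw [dist_comm (β T) o, h1] at this
    linarith [abs_le.mp this |>.1]
  refine le_of_forall_pos_le_add (fun ε hε => ?_)
  refine Filter.limsup_le_of_le hcb ?_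
  have h1 : ∀ᶠ n in atTop, T ≤ dist o (w n) := hwo.eventually (eventually_ge_atTop T)
  have h2 : ∀ᶠ n in atTop, dist (γseg n T) (γ T) < ε := by
    have := Metric.tendsto_nhds.mp hγTconv ε hε
    exact this
  filter_upwards [h1, h2] with n hn1 hn2
  obtain ⟨hg0, hgL, hgd⟩ := hγseg n
  have hdw : dist (γseg n T) (w n) = dist o (w n) - T := by
    have := hgd T (dist o (w n)) ⟨hT, hn1⟩ ⟨dist_nonneg, le_rfl⟩
    rw [hgL] at this
    rw [this, abs_of_nonpos (by linarith)]
    ring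
  have htri : dist (β T) (w n) ≤ dist (β T) (γseg n T) + dist (γseg n T) (w n) :=
    dist_triangle _ _ _
  have htri2 : dist (β T) (γseg n T) ≤ 2 * δ + ε := by
    calc dist (β T) (γseg n T) ≤ dist (β T) (γ T) + dist (γ T) (γseg n T) := dist_triangle _ _ _
    _ ≤ 2 * δ + ε := by rw [dist_comm (γ T)]; linarith
  have : dist (β T) (w n) - dist o (w n) ≤ 2 * δ + ε - T := by
    rw [hdw] at htri; linarith
  have : (2:ℝ) * δ + ε - T ≤ -T + 10 * δ + ε := by linarith
  linarith
end

section
/- Dini-smooth boundary point estimate implies membership of nearby normal points in small horospheres: let Ω be a bounded domain in ℂ^d with distance k (e.g. Kobayashi), o ∈ Ω, x ∈ ∂Ω, δ(·) the Euclidean boundary-distance function. Assume (i) there is C ∈ ℝ with k(o,w) ≥ C + (1/2) log(1/δ(w)) for all w ∈ Ω, and (ii) there are ε > 0, c > 0 with k(z,w) ≤ log(1 + c‖z−w‖/√(δ(z)δ(w))) for all z,w ∈ B(x,ε) ∩ Ω. Then for every z ∈ B(x,ε) ∩ Ω, limsup_{w→x} (k(z,w) − k(o,w)) ≤ (1/2)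 log‖z−x‖ + (1/2) log(‖z−x‖/δ(z)) + (log c − C). In particular, if there is a sequence z_j → x with ‖z_j − x‖/δ(z_j) bounded, then for every R > 0 there exist points z arbitrarily close to x with limsup_{w→x}(k(z,w) − k(o,w)) < (1/2) log R, i.e. x lies in the closure of the small horosphere H^s_o(x,R). -/
open Filter Topology

/-- Dini-smooth boundary point estimate: let `Ω` be a bounded (open) domain
in a normed space, `k` a distance on `Ω`, `δ(z) = dist(z, ∂Ω)`, `o ∈ Ω`, `x ∈ ∂Ω`.
Assume the Mercer lower bound `k(o,w) ≥ C + (1/2) log(1/δ(w))` on `Ω` and the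
Nikolov–Andreev upper bound `k(z,w) ≤ log(1 + c‖z-w‖/√(δ(z)δ(w)))` on `B(x,ε) ∩ Ω`. Then
for every `z ∈ B(x,ε) ∩ Ω`,
`limsup_{w→x, w∈Ω} (k(z,w) - k(o,w)) ≤ (1/2) log‖z-x‖ + (1/2) log(‖z-x‖/δ(z)) + (log c - C)`;
and if some sequence `z_j ∈ Ω` tends to `x` with `‖z_j - x‖/δ(z_j)` bounded, then for every
`R > 0` there are points of the small horosphere `H^s_o(x,R)` arbitrarily close to `x`. -/
theorem stmt15 {E : Type*} [NormedAddCommGroup E] [NormedSpace ℝ E]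
    (Ω : Set E) (hΩopen : IsOpen Ω) (hΩbdd : Bornology.IsBounded Ω)
    (k : E → E → ℝ)
    (hksym : ∀ a b, k a b = k b a) (hktri : ∀ a b c, k a c ≤ k a b + k b c)
    (δ : E → ℝ) (hδ : ∀ z, δ z = Metric.infDist z (frontier Ω))
    (o : E) (ho : o ∈ Ω) (x : E) (hx : x ∈ frontier Ω)
    (C : ℝ) (hMercer : ∀ w ∈ Ω, C + (1/2) * Real.log (1 / δ w) ≤ k o w)
    (ε c : ℝ) (hε : 0 < ε) (hc : 0 < c)
    (hNA : ∀ z ∈ Metric.ball x ε ∩ Ω, ∀ w ∈ Metric.ball x ε ∩ Ω,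
      k z w ≤ Real.log (1 + c * ‖z - w‖ / Real.sqrt (δ z * δ w))) :
    (∀ z ∈ Metric.ball x ε ∩ Ω,
      Filter.limsup (fun w => k z w - k o w) (𝓝[Ω] x) ≤
        (1/2) * Real.log ‖z - x‖ + (1/2) * Real.log (‖z - x‖ / δ z) + (Real.log c - C)) ∧
    ((∃ zs : ℕ → E, (∀ j, zs j ∈ Ω) ∧ Tendsto zs atTop (𝓝 x) ∧
        ∃ K : ℝ, ∀ j, ‖zs j - x‖ / δ (zs j) ≤ K) →
      ∀ R : ℝ, 0 < R → ∀ η : ℝ, 0 < η → ∃ z ∈ Ω, ‖z - x‖ < η ∧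
        Filter.limsup (fun w => k z w - k o w) (𝓝[Ω] x) < (1/2) * Real.log R) := by

  have hδcont : Continuous δ := by
    have h : δ = fun z => Metric.infDist z (frontier Ω) := funext hδ
    rw [h]; exact Metric.continuous_infDist_pt _
  have hδx : δ x = 0 := by rw [hδ]; exact Metric.infDist_zero_of_mem hx
  have hδpos : ∀ z ∈ Ω, 0 < δ z := by
    intro z hz
    rw [hδ]
    refine (IsClosed.notMem_iff_infDist_pos isClosed_frontier ⟨x, hx⟩).mp ?_
    rw [hΩopen.frontier_eq]
    exact fun h => h.2 hz
  have hxΩ : x ∉ Ω := fun h => absurd hδx (ne_of_gt (hδpos x h))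
  haveI : (𝓝[Ω] x).NeBot :=
    mem_closure_iff_nhdsWithin_neBot.mp (frontier_subset_closure hx)
  have main : ∀ z ∈ Metric.ball x ε ∩ Ω,
      Filter.limsup (fun w => k z w - k o w) (𝓝[Ω] x) ≤
        (1/2) * Real.log ‖z - x‖ + (1/2) * Real.log (‖z - x‖ / δ z) + (Real.log c - C) := by
    rintro z ⟨hzball, hzΩ⟩
    have hδz : 0 < δ z := hδpos z hzΩ
    have hzx : z ≠ x := fun h => hxΩ (h ▸ hzΩ)
    have hs : 0 < ‖z - x‖ := by simpa [sub_eq_zero] using hzx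
    set g : E → ℝ := fun w =>
      Real.log (Real.sqrt (δ z * δ w) + c * ‖z - w‖) - (1/2) * Real.log (δ z) - C with hg
    have hargx : Real.sqrt (δ z * δ x) + c * ‖z - x‖ = c * ‖z - x‖ := by
      rw [hδx, mul_zero, Real.sqrt_zero, zero_add]
    have hcont : ContinuousAt g x := by
      have harg : ContinuousAt (fun w => Real.sqrt (δ z * δ w) + c * ‖z - w‖) x :=
        (((Real.continuous_sqrt.comp (continuous_const.mul hδcont)).add
          (continuous_const.mul ((continuous_const.sub continuous_id).norm))).continuousAt)
      have hne : Real.sqrt (δ z * δ x) + c * ‖z - x‖ ≠ 0 := by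
        rw [hargx]; positivity
      exact ((harg.log hne).sub continuousAt_const).sub continuousAt_const
    have hgL : Tendsto g (𝓝[Ω] x) (𝓝 (g x)) := hcont.continuousWithinAt.tendsto
    have hgx : g x = (1/2) * Real.log ‖z - x‖ + (1/2) * Real.log (‖z - x‖ / δ z)
        + (Real.log c - C) := by
      simp only [hg]
      rw [hargx, Real.log_mul hc.ne' hs.ne', Real.log_div hs.ne' hδz.ne']
      ring
    have hev : ∀ᶠ w in 𝓝[Ω] x, k z w - k o w ≤ g w := by
      filter_upwards [self_mem_nhdsWithin,
        nhdsWithin_le_nhds (Metric.ball_mem_nhds x hε)] with w hwΩ hwball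
      have hδw : 0 < δ w := hδpos w hwΩ
      have hsq : 0 < Real.sqrt (δ z * δ w) := Real.sqrt_pos.mpr (by positivity)
      have h1 := hNA z ⟨hzball, hzΩ⟩ w ⟨hwball, hwΩ⟩
      have h2 := hMercer w hwΩ
      have key : Real.log (1 + c * ‖z - w‖ / Real.sqrt (δ z * δ w))
          = Real.log (Real.sqrt (δ z * δ w) + c * ‖z - w‖)
            - (1/2) * Real.log (δ z) - (1/2) * Real.log (δ w) := by
        rw [show (1 : ℝ) + c * ‖z - w‖ / Real.sqrt (δ z * δ w)
            = (Real.sqrt (δ z * δ w) + c * ‖z - w‖) / Real.sqrt (δ z * δ w) by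
          field_simp]
        rw [Real.log_div (by positivity) hsq.ne',
          Real.log_sqrt (by positivity), Real.log_mul hδz.ne' hδw.ne']
        ring
      have hinv : Real.log (1 / δ w) = - Real.log (δ w) := by
        rw [one_div, Real.log_inv]
      rw [key] at h1
      rw [hinv] at h2
      show k z w - k o w ≤
        Real.log (Real.sqrt (δ z * δ w) + c * ‖z - w‖) - (1/2) * Real.log (δ z) - C
      linarith
    have hlb : IsCoboundedUnder (· ≤ ·) (𝓝[Ω] x) (fun w => k z w - k o w) :=
      isCoboundedUnder_le_of_le (𝓝[Ω] x) (x := -(k o z))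
        (fun w => by linarith [hktri o z w])
    calc Filter.limsup (fun w => k z w - k o w) (𝓝[Ω] x)
        ≤ Filter.limsup g (𝓝[Ω] x) :=
          limsup_le_limsup hev hlb hgL.isBoundedUnder_le
      _ = g x := hgL.limsup_eq
      _ = _ := hgx
  refine ⟨main, ?_⟩
  rintro ⟨zs, hzsΩ, hzs, K, hK⟩ R hR η hη
  have hδ0 : 0 < δ (zs 0) := hδpos _ (hzsΩ 0)
  have hzs0x : zs 0 ≠ x := fun h => hxΩ (h ▸ hzsΩ 0)
  have hq0 : 0 < ‖zs 0 - x‖ / δ (zs 0) := by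
    apply div_pos _ hδ0
    simpa [sub_eq_zero] using hzs0x
  have hK0 : 0 < K := lt_of_lt_of_le hq0 (hK 0)
  set t : ℝ := Real.exp (Real.log R - Real.log K - 2 * Real.log c + 2 * C - 1) with ht
  have ht0 : 0 < t := Real.exp_pos _
  obtain ⟨N, hN⟩ := (Metric.tendsto_atTop.mp hzs) (min ε (min η t))
    (lt_min hε (lt_min hη ht0))
  have hdist := hN N le_rfl
  rw [dist_eq_norm] at hdist
  have hlt_ε : ‖zs N - x‖ < ε := hdist.trans_le (min_le_left _ _)
  have hlt_η : ‖zs N - x‖ < η := hdist.trans_le ((min_le_right _ _).trans (min_le_left _ _))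
  have hlt_t : ‖zs N - x‖ < t := hdist.trans_le ((min_le_right _ _).trans (min_le_right _ _))
  refine ⟨zs N, hzsΩ N, hlt_η, ?_⟩
  have hball : zs N ∈ Metric.ball x ε ∩ Ω := by
    refine ⟨?_, hzsΩ N⟩
    rw [Metric.mem_ball, dist_eq_norm]; exact hlt_ε
  have hmain := main (zs N) hball
  have hδN : 0 < δ (zs N) := hδpos _ (hzsΩ N)
  have hzNx : zs N ≠ x := fun h => hxΩ (h ▸ hzsΩ N)
  have hsN : 0 < ‖zs N - x‖ := by simpa [sub_eq_zero] using hzNx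
  have hlog1 : Real.log ‖zs N - x‖ < Real.log t := Real.log_lt_log hsN hlt_t
  have hlogt : Real.log t = Real.log R - Real.log K - 2 * Real.log c + 2 * C - 1 := by
    rw [ht, Real.log_exp]
  have hlog2 : Real.log (‖zs N - x‖ / δ (zs N)) ≤ Real.log K :=
    Real.log_le_log (div_pos hsN hδN) (hK N)
  calc Filter.limsup (fun w => k (zs N) w - k o w) (𝓝[Ω] x)
      ≤ (1/2) * Real.log ‖zs N - x‖ + (1/2) * Real.log (‖zs N - x‖ / δ (zs N))
        + (Real.log c - C) := hmain
    _ < (1/2) * Real.log R := by rw [hlogt] at hlog1; linarith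
end

section
/- Visibility via Gromov products excludes other boundary points from closures of big horospheres (abstract version): let X be a metric space, o ∈ X, and F, G two nontrivial filters on X (representing approach to boundary points x and y). Suppose (visibility) there is M < ∞ with limsup over F×G of ⟨z|w⟩_o ≤ M, meaning: there are sets A ∈ F, B ∈ G with ⟨z|w⟩_o ≤ M for all z ∈ A, w ∈ B. Suppose (y_n) is a sequence with y_n eventually in every set of F (i.e. y_n → y along F) and d(o,y_n) → ∞. Then for every R > 0, y_n ∉ H^b_G(R) := {z : liminf_G (d(z,w) − d(o,w)) < (1/2) log R} for all large n. -/
open Filter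

/-- Visibility via bounded Gromov products excludes other boundary points
from closures of big horospheres (abstract version): if there are `A ∈ F`, `B ∈ G` with
`⟨z|w⟩_o ≤ M` for all `z ∈ A`, `w ∈ B`, and `(y_n)` tends to the boundary point of `F`
(`y → F`) with `d(o,y_n) → ∞`, then for every `R > 0`, eventually
`y_n ∉ H^b_G(R) = {z : liminf_G (d(z,w) - d(o,w)) < (1/2) log R}`. -/
theorem stmt18 {X : Type*} [MetricSpace X] (o : X) (F G : Filter X) [F.NeBot] [G.NeBot]
    (M : ℝ)
    (hvis : ∃ A ∈ F, ∃ B ∈ G, ∀ z ∈ A, ∀ w ∈ B,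
      (dist o z + dist o w - dist z w) / 2 ≤ M)
    (y : ℕ → X) (hyF : Tendsto y atTop F)
    (hyd : Tendsto (fun n => dist o (y n)) atTop atTop) :
    ∀ R : ℝ, 0 < R → ∀ᶠ n in atTop,
      ¬ (Filter.liminf (fun w => dist (y n) w - dist o w) G < (1/2) * Real.log R) := by
  intro R hR
  obtain ⟨A, hA, B, hB, hAB⟩ := hvis
  have h1 : ∀ᶠ n in atTop, y n ∈ A := hyF hA
  have h2 : ∀ᶠ n in atTop, 2 * M + (1/2) * Real.log R ≤ dist o (y n) :=
    hyd.eventually_ge_atTop _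
  filter_upwards [h1, h2] with n hnA hnd hlt
  -- the function is bounded above by dist o (y n)
  have hbdd : IsBoundedUnder (· ≤ ·) G (fun w => dist (y n) w - dist o w) := by
    refine isBoundedUnder_of ⟨dist o (y n), fun w => ?_⟩
    have := dist_triangle (y n) o w
    simp only [dist_comm (y n) o] at this ⊢
    linarith
  have hlb : (1/2) * Real.log R ≤
      Filter.liminf (fun w => dist (y n) w - dist o w) G := by
    refine le_liminf_of_le hbdd.isCoboundedUnder_ge ?_
    filter_upwards [hB] with w hw
    have := hAB (y n) hnA w hw
    linarith
  linarith
end
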